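/- Let D be a finite, connected, acyclic digraph with a U-coloring and with unique sink s. For any vertex x and any two directed paths p, p' from x to a common vertex z, the multisets of colors appearing on the arcs of p and of p' are equal. -/

import Mathlib

def UColoring {V κ : Type*} (A : V → V → Prop) (c : V → V → κ) : Prop :=
  (∀ v u w : V, A v u → A v w → u ≠ w → c v u ≠ c v w) ∧
  (∀ v u w : V, A v u → A v w → u ≠ w →
    ∃ z : V, A u z ∧ A w z ∧ c v u = c w z ∧ c v w = c u z)

/-- Directed paths with their color multiset. -/
inductive PT {V κ : Type} (A : V → V → Prop) (c : V → V → κ) : V → V → Multiset κ → Prop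
  | nil (x : V) : PT A c x x 0
  | cons {x y z : V} {m : Multiset κ} : A x y → PT A c y z m → PT A c x z (c x y ::ₘ m)

lemma PT.trans {V κ : Type} {A : V → V → Prop} {c : V → V → κ} {x y z : V}
    {m m' : Multiset κ} (h : PT A c x y m) (h' : PT A c y z m') :
    PT A c x z (m + m') := by
  induction h with
  | nil => simpa using h'
  | cons ha _ ih =>
      simpa [Multiset.cons_add] using PT.cons ha (ih h')

lemma wf_rev {V : Type} [Fintype V] {A : V → V → Prop}
    (hacyc : ∀ x : V, ¬ Relation.TransGen A x x) :
    WellFounded (fun a b => Relation.TransGen A b a) := by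
  have : IsTrans V (fun a b => Relation.TransGen A b a) :=
    ⟨fun a b d hab hbd => hbd.trans hab⟩
  have : IsIrrefl V (fun a b => Relation.TransGen A b a) := ⟨fun a h => hacyc a h⟩
  exact Finite.wellFounded_of_trans_of_irrefl _

lemma PT_to_sink {V κ : Type} [Fintype V] {A : V → V → Prop} {c : V → V → κ}
    (hacyc : ∀ x : V, ¬ Relation.TransGen A x x)
    (s : V) (hs_uniq : ∀ t : V, (∀ w : V, ¬ A t w) → t = s) :
    ∀ x : V, ∃ m : Multiset κ, PT A c x s m := by
  intro x
  induction x using (wf_rev hacyc).induction with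
  | _ x IH =>
    by_cases hx : x = s
    · exact ⟨0, hx ▸ PT.nil x⟩
    · have : ¬ ∀ w : V, ¬ A x w := fun h => hx (hs_uniq x h)
      push_neg at this
      obtain ⟨w, hw⟩ := this
      obtain ⟨m, hm⟩ := IH w (Relation.TransGen.single hw)
      exact ⟨c x w ::ₘ m, PT.cons hw hm⟩

lemma PT_sink_unique {V κ : Type} [Fintype V] {A : V → V → Prop} {c : V → V → κ}
    (hacyc : ∀ x : V, ¬ Relation.TransGen A x x) (hU : UColoring A c)
    (s : V) (hs : ∀ w : V, ¬ A s w) (hs_uniq : ∀ t : V, (∀ w : V, ¬ A t w) → t = s) :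
    ∀ x : V, ∀ m m' : Multiset κ, PT A c x s m → PT A c x s m' → m = m' := by
  intro x
  induction x using (wf_rev hacyc).induction with
  | _ x IH =>
    intro m m' h h'
    by_cases hx : x = s
    · subst hx
      cases h with
      | nil =>
        cases h' with
        | nil => rfl
        | cons ha _ => exact absurd ha (hs _)
      | cons ha _ => exact absurd ha (hs _)
    · cases h with
      | nil => exact absurd rfl hx
      | cons hxu hu =>
        cases h' with
        | nil => exact absurd rfl hx
        | cons hxw hw =>
          rename_i u m₁ w m₂
          by_cases huw : u = w
          · subst huw
            rw [IH u (Relation.TransGen.single hxu) m₁ m₂ hu hw]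
          · obtain ⟨zz, huz, hwz, hc1, hc2⟩ := hU.2 x u w hxu hxw huw
            obtain ⟨q, hq⟩ := PT_to_sink (c := c) hacyc s hs_uniq zz
            have e1 : m₁ = c u zz ::ₘ q :=
              IH u (Relation.TransGen.single hxu) _ _ hu (PT.cons huz hq)
            have e2 : m₂ = c w zz ::ₘ q :=
              IH w (Relation.TransGen.single hxw) _ _ hw (PT.cons hwz hq)
            rw [e1, e2, hc1, hc2, Multiset.cons_swap]

lemma PT_unique {V κ : Type} [Fintype V] {A : V → V → Prop} {c : V → V → κ}
    (hacyc : ∀ x : V, ¬ Relation.TransGen A x x) (hU : UColoring A c)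
    (s : V) (hs : ∀ w : V, ¬ A s w) (hs_uniq : ∀ t : V, (∀ w : V, ¬ A t w) → t = s)
    {x z : V} {m m' : Multiset κ} (h : PT A c x z m) (h' : PT A c x z m') : m = m' := by
  obtain ⟨q, hq⟩ := PT_to_sink (c := c) hacyc s hs_uniq z
  have := PT_sink_unique hacyc hU s hs hs_uniq x (m + q) (m' + q)
    (h.trans hq) (h'.trans hq)
  exact add_right_cancel this

lemma PT_of_fun {V κ : Type} {A : V → V → Prop} {c : V → V → κ} :
    ∀ (k : ℕ) (p : ℕ → V), (∀ i, i < k → A (p i) (p (i + 1))) →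
      PT A c (p 0) (p k)
        (((List.range k).map (fun i => c (p i) (p (i + 1)))) : Multiset κ) := by
  intro k
  induction k with
  | zero => intro p _; simpa using PT.nil (p 0)
  | succ k ih =>
    intro p hp
    have h1 := ih p (fun i hi => hp i (hi.trans (Nat.lt_succ_self k)))
    have h2 : PT A c (p k) (p (k + 1)) (c (p k) (p (k + 1)) ::ₘ 0) :=
      PT.cons (hp k (Nat.lt_succ_self k)) (PT.nil _)
    have := h1.trans h2
    simp only [List.range_succ, List.map_append, List.map_cons, List.map_nil]
    rw [← Multiset.coe_add]
    simpa using this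

theorem stmt_2 {V κ : Type} [Fintype V] (A : V → V → Prop) (c : V → V → κ)
    (hconn : ∀ x y : V, Relation.ReflTransGen (fun a b => A a b ∨ A b a) x y)
    (hacyc : ∀ x : V, ¬ Relation.TransGen A x x)
    (hU : UColoring A c)
    (s : V) (hs : ∀ w : V, ¬ A s w) (hs_uniq : ∀ t : V, (∀ w : V, ¬ A t w) → t = s)
    (x z : V) (k k' : ℕ) (p p' : ℕ → V)
    (hp0 : p 0 = x) (hpk : p k = z) (hp : ∀ i, i < k → A (p i) (p (i + 1)))
    (hp0' : p' 0 = x) (hpk' : p' k' = z) (hp' : ∀ i, i < k' → A (p' i) (p' (i + 1))) :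
    (((List.range k).map (fun i => c (p i) (p (i + 1)))) : Multiset κ) =
      (((List.range k').map (fun i => c (p' i) (p' (i + 1)))) : Multiset κ) := by
  have h1 := PT_of_fun (A := A) (c := c) k p hp
  have h2 := PT_of_fun (A := A) (c := c) k' p' hp'
  rw [hp0, hpk] at h1
  rw [hp0', hpk'] at h2
  exact PT_unique hacyc hU s hs hs_uniq h1 h2
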